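/- There exists an absolute constant C > 0 such that for all real β with 0 < β ≤ 1, all real Δ ≥ 1, and all complex z = x + iy, one has |m⁻_{β,Δ}(z)| ≤ C · β · Δ² · e^{2πΔ|y|} / (1 + Δ|z|). -/

import Mathlib

open scoped Real
open Complex

noncomputable def mMinusC (β Δ : ℝ) (z : ℂ) : ℂ :=
  ((β : ℂ) / ((β : ℂ) ^ 2 + z ^ 2)) *
    (((Real.exp (2 * π * β * Δ) : ℂ) + (Real.exp (-(2 * π * β * Δ)) : ℂ)
        - 2 * Complex.cos (2 * π * Δ * z)) /
      ((Real.exp (π * β * Δ) : ℂ) + (Real.exp (-(π * β * Δ)) : ℂ)) ^ 2)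

lemma exp_wI_le (w : ℂ) : ‖Complex.exp (w*I)‖ ≤ Real.exp |w.im| := by
  rw [Complex.norm_exp]
  exact Real.exp_le_exp.2 (by simpa [Complex.mul_I_re] using neg_le_abs w.im)

lemma exp_nwI_le (w : ℂ) : ‖Complex.exp (-(w*I))‖ ≤ Real.exp |w.im| := by
  rw [Complex.norm_exp]
  exact Real.exp_le_exp.2 (by simpa [Complex.mul_I_re] using le_abs_self w.im)

lemma abs_cos_le (w : ℂ) : ‖Complex.cos w‖ ≤ Real.exp |w.im| := by
  rw [Complex.cos, neg_mul, norm_div, Complex.norm_two]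
  have h3 := norm_add_le (Complex.exp (w*I)) (Complex.exp (-(w*I)))
  linarith [exp_wI_le w, exp_nwI_le w, h3]

lemma abs_sin_le' (w : ℂ) : ‖Complex.sin w‖ ≤ Real.exp |w.im| := by
  rw [Complex.sin, norm_div, Complex.norm_two, norm_mul, Complex.norm_I, mul_one]
  have h3 : ‖Complex.exp (-(w*I)) - Complex.exp (w*I)‖ ≤
      ‖Complex.exp (-(w*I))‖ + ‖Complex.exp (w*I)‖ := by
    calc ‖Complex.exp (-(w*I)) - Complex.exp (w*I)‖
        = ‖Complex.exp (-(w*I)) + -(Complex.exp (w*I))‖ := by ring_nf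
      _ ≤ _ := by simpa using norm_add_le (Complex.exp (-(w*I))) (-(Complex.exp (w*I)))
  have h4 : ‖Complex.exp (-w*I) - Complex.exp (w*I)‖ =
      ‖Complex.exp (-(w*I)) - Complex.exp (w*I)‖ := by rw [neg_mul]
  rw [h4]
  linarith [exp_wI_le w, exp_nwI_le w, h3]

lemma abs_sin_le_mul (w : ℂ) : ‖Complex.sin w‖ ≤ ‖w‖ * Real.exp |w.im| := by
  have hd : ∀ t ∈ Set.Icc (0:ℝ) 1, HasDerivWithinAt (fun t : ℝ => Complex.sin (t * w))
      (Complex.cos (t*w) * w) (Set.Icc 0 1) t := by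
    intro t _
    have h1 : HasDerivAt (fun u : ℂ => Complex.sin (u * w)) (Complex.cos ((t:ℂ)*w) * w) (t:ℝ) := by
      simpa [Function.comp_def] using (Complex.hasDerivAt_sin ((t:ℂ)*w)).comp (t:ℂ)
        ((hasDerivAt_id ((t:ℂ))).mul_const w)
    exact h1.comp_ofReal.hasDerivWithinAt
  have hb : ∀ t ∈ Set.Icc (0:ℝ) 1, ‖Complex.cos ((t:ℝ)*w) * w‖ ≤ Real.exp |w.im| * ‖w‖ := by
    intro t ht
    rw [norm_mul]
    have h1 : ‖Complex.cos ((t:ℝ)*w)‖ ≤ Real.exp |w.im| := by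
      refine (abs_cos_le _).trans (Real.exp_le_exp.2 ?_)
      have : (((t:ℝ):ℂ)*w).im = t * w.im := by simp
      rw [this, abs_mul, _root_.abs_of_nonneg ht.1]
      calc t * |w.im| ≤ 1 * |w.im| := by gcongr; exact ht.2
        _ = |w.im| := one_mul _
    exact mul_le_mul_of_nonneg_right h1 (norm_nonneg _)
  have := (convex_Icc (0:ℝ) 1).norm_image_sub_le_of_norm_hasDerivWithin_le hd hb
    (Set.left_mem_Icc.2 zero_le_one) (Set.right_mem_Icc.2 zero_le_one)
  simpa [mul_comm] using this

lemma num_factor (β Δ : ℝ) (z : ℂ) :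
    ((Real.exp (2 * π * β * Δ) : ℂ) + (Real.exp (-(2 * π * β * Δ)) : ℂ)
        - 2 * Complex.cos (2 * π * Δ * z))
      = 4 * Complex.sin (π * Δ * (z + β * I)) * Complex.sin (π * Δ * (z - β * I)) := by
  have h0 : ((Real.exp (2*π*β*Δ) : ℂ) + (Real.exp (-(2*π*β*Δ)) : ℂ))
      = 2 * Complex.cos (((2*π*β*Δ:ℝ):ℂ) * I) := by
    rw [Complex.cos_mul_I, ← Complex.ofReal_cosh, Real.cosh_eq]
    push_cast
    ring
  rw [h0]
  calc 2 * Complex.cos (((2*π*β*Δ:ℝ):ℂ) * I) - 2 * Complex.cos (2 * π * Δ * z)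
      = 2 * (Complex.cos (((2*π*β*Δ:ℝ):ℂ) * I) - Complex.cos (2 * π * Δ * z)) := by ring
    _ = 2 * (-2 * Complex.sin (((((2*π*β*Δ:ℝ):ℂ) * I) + 2 * π * Δ * z)/2)
          * Complex.sin (((((2*π*β*Δ:ℝ):ℂ) * I) - 2 * π * Δ * z)/2)) := by
        rw [Complex.cos_sub_cos]
    _ = 4 * Complex.sin (((((2*π*β*Δ:ℝ):ℂ) * I) + 2 * π * Δ * z)/2)
          * -Complex.sin (((((2*π*β*Δ:ℝ):ℂ) * I) - 2 * π * Δ * z)/2) := by ring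
    _ = 4 * Complex.sin (π * Δ * (z + β * I)) * Complex.sin (π * Δ * (z - β * I)) := by
        rw [← Complex.sin_neg]
        congr 2
        · push_cast; ring
        · push_cast; ring

lemma key_est {Δ Ea r s₁ s₂ B₁ B₂ : ℝ} (hΔ0 : 0 < Δ) (hEa : 0 < Ea) (hr : 0 ≤ r)
    (hB₁ : 0 ≤ B₁) (hB₂ : 0 ≤ B₂) (hs₁ : 0 < s₁) (hs₂ : 0 < s₂) (hrs : r ≤ s₁)
    (h₁e : B₁ ≤ Ea) (h₁m : B₁ ≤ π * Δ * s₁ * Ea) (h₂m : B₂ ≤ π * Δ * s₂ * Ea) :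
    B₁ * B₂ * (1 + Δ * r) ≤ 2 * π^2 * Δ^2 * Ea^2 * (s₁ * s₂) := by
  have hπ := Real.pi_pos
  have hππ : π ≤ π^2 := by nlinarith [Real.pi_gt_three]
  rcases le_or_gt (Δ * r) 1 with hc | hc
  · have h1 : B₁ * B₂ ≤ (π*Δ*s₁*Ea) * (π*Δ*s₂*Ea) := mul_le_mul h₁m h₂m hB₂ (by positivity)
    have h2 : B₁ * B₂ * (1 + Δ*r) ≤ ((π*Δ*s₁*Ea) * (π*Δ*s₂*Ea)) * 2 :=
      mul_le_mul h1 (by linarith) (by nlinarith) (by positivity)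
    have h3 : ((π*Δ*s₁*Ea) * (π*Δ*s₂*Ea)) * 2 = 2*π^2*Δ^2*Ea^2*(s₁*s₂) := by ring
    linarith
  · have h1 : B₁ * B₂ ≤ Ea * (π*Δ*s₂*Ea) := mul_le_mul h₁e h₂m hB₂ hEa.le
    have h2 : B₁*B₂*(1+Δ*r) ≤ (Ea*(π*Δ*s₂*Ea))*(2*(Δ*r)) :=
      mul_le_mul h1 (by linarith) (by nlinarith) (by positivity)
    have h5 : π * r ≤ π^2 * s₁ := by
      nlinarith [mul_le_mul_of_nonneg_left hrs hπ.le, mul_le_mul_of_nonneg_right hππ hs₁.le]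
    have h6 : (Ea*(π*Δ*s₂*Ea))*(2*(Δ*r)) = (2*Δ^2*Ea^2*s₂)*(π*r) := by ring
    have h7 : (2*Δ^2*Ea^2*s₂)*(π*r) ≤ (2*Δ^2*Ea^2*s₂)*(π^2*s₁) :=
      mul_le_mul_of_nonneg_left h5 (by positivity)
    have h8 : (2*Δ^2*Ea^2*s₂)*(π^2*s₁) = 2*π^2*Δ^2*Ea^2*(s₁*s₂) := by ring
    linarith

set_option maxHeartbeats 1000000 in
theorem complex_growth_bound_minorant :
    ∃ C : ℝ, 0 < C ∧ ∀ β Δ : ℝ, ∀ z : ℂ, 0 < β → β ≤ 1 → 1 ≤ Δ →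
      ‖mMinusC β Δ z‖ ≤
        C * β * Δ ^ 2 * Real.exp (2 * π * Δ * |z.im|) / (1 + Δ * ‖z‖) := by
  have hπ := Real.pi_pos
  refine ⟨8 * π ^ 2, by positivity, fun β Δ z hβ hβ1 hΔ => ?_⟩
  have hΔ0 : (0:ℝ) < Δ := lt_of_lt_of_le one_pos hΔ
  have hr0 : (0:ℝ) ≤ ‖z‖ := norm_nonneg z
  have hden : (0:ℝ) < 1 + Δ * ‖z‖ := by positivity
  by_cases h0 : (β:ℂ)^2 + z^2 = 0
  · rw [show mMinusC β Δ z = 0 by simp [mMinusC, h0]]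
    rw [norm_zero]
    positivity
  -- notation
  set y : ℝ := |z.im| with hy
  set r : ℝ := ‖z‖ with hr
  set w₁ : ℂ := z + (β:ℂ) * I with hw₁
  set w₂ : ℂ := z - (β:ℂ) * I with hw₂
  have hfac : (β:ℂ)^2 + z^2 = w₁ * w₂ := by
    rw [hw₁, hw₂, show (z + (β:ℂ)*I) * (z - (β:ℂ)*I) = z^2 - (β:ℂ)^2 * I^2 by ring,
      Complex.I_sq]
    ring
  set r₁ : ℝ := ‖w₁‖ with hr₁
  set r₂ : ℝ := ‖w₂‖ with hr₂
  have hw₁0 : w₁ ≠ 0 := fun h => h0 (by rw [hfac, h, zero_mul])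
  have hw₂0 : w₂ ≠ 0 := fun h => h0 (by rw [hfac, h, mul_zero])
  have hr₁0 : 0 < r₁ := norm_pos_iff.mpr hw₁0
  have hr₂0 : 0 < r₂ := norm_pos_iff.mpr hw₂0
  set Dr : ℝ := Real.exp (π*β*Δ) + Real.exp (-(π*β*Δ)) with hDrdef
  have hDr : 0 < Dr := by positivity
  set A₁ : ℝ := ‖Complex.sin (π * Δ * (z + β * I))‖ with hA₁
  set A₂ : ℝ := ‖Complex.sin (π * Δ * (z - β * I))‖ with hA₂
  have hA₁0 : 0 ≤ A₁ := norm_nonneg _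
  have hA₂0 : 0 ≤ A₂ := norm_nonneg _
  -- |mMinusC| computation
  have hAbs : ‖mMinusC β Δ z‖ = β * (4 * A₁ * A₂) / (r₁ * r₂ * Dr^2) := by
    rw [mMinusC, num_factor, hfac, show ((Real.exp (π*β*Δ) : ℂ) + (Real.exp (-(π*β*Δ)) : ℂ))
      = ((Dr:ℝ):ℂ) from by rw [hDrdef]; push_cast; ring]
    rw [norm_mul, norm_div, norm_div, norm_mul, norm_mul, norm_mul, norm_pow,
      Complex.norm_real, Real.norm_eq_abs, Complex.norm_real, Real.norm_eq_abs, _root_.abs_of_pos hβ, _root_.abs_of_pos hDr]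
    have : ‖(4:ℂ)‖ = 4 := by norm_num
    rw [this, ← hA₁, ← hA₂, ← hr₁, ← hr₂]
    field_simp
  rw [hAbs]
  -- bounds on A₁, A₂
  set Ea : ℝ := Real.exp (π*Δ*y) * Real.exp (π*β*Δ) with hEa
  have hEa0 : 0 < Ea := by positivity
  have him₁ : (π * Δ * (z + (β:ℂ) * I)).im = π * Δ * (z.im + β) := by
    simp [Complex.mul_im, Complex.add_im]
  have him₂ : (π * Δ * (z - (β:ℂ) * I)).im = π * Δ * (z.im - β) := by
    simp [Complex.mul_im, Complex.sub_im]
  have hexp₁ : Real.exp |(π * Δ * (z + (β:ℂ) * I)).im| ≤ Ea := by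
    rw [him₁, hEa, ← Real.exp_add]
    apply Real.exp_le_exp.2
    rw [abs_mul, _root_.abs_of_pos (by positivity : (0:ℝ) < π * Δ)]
    have : |z.im + β| ≤ y + β := by
      rw [hy]; calc |z.im + β| ≤ |z.im| + |β| := abs_add_le _ _
        _ = |z.im| + β := by rw [_root_.abs_of_pos hβ]
    nlinarith [this, mul_pos hπ hΔ0]
  have hexp₂ : Real.exp |(π * Δ * (z - (β:ℂ) * I)).im| ≤ Ea := by
    rw [him₂, hEa, ← Real.exp_add]
    apply Real.exp_le_exp.2
    rw [abs_mul, _root_.abs_of_pos (by positivity : (0:ℝ) < π * Δ)]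
    have : |z.im - β| ≤ y + β := by
      rw [hy]; calc |z.im - β| ≤ |z.im| + |β| := abs_sub _ _
        _ = |z.im| + β := by rw [_root_.abs_of_pos hβ]
    nlinarith [this, mul_pos hπ hΔ0]
  have habs₁ : ‖π * Δ * (z + (β:ℂ) * I)‖ = π * Δ * r₁ := by
    rw [norm_mul, norm_mul, Complex.norm_real, Real.norm_eq_abs, Complex.norm_real, Real.norm_eq_abs,
      _root_.abs_of_pos hπ, _root_.abs_of_pos hΔ0, hr₁, hw₁]
  have habs₂ : ‖π * Δ * (z - (β:ℂ) * I)‖ = π * Δ * r₂ := by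
    rw [norm_mul, norm_mul, Complex.norm_real, Real.norm_eq_abs, Complex.norm_real, Real.norm_eq_abs,
      _root_.abs_of_pos hπ, _root_.abs_of_pos hΔ0, hr₂, hw₂]
  have hA₁e : A₁ ≤ Ea := (abs_sin_le' _).trans hexp₁
  have hA₂e : A₂ ≤ Ea := (abs_sin_le' _).trans hexp₂
  have hA₁m : A₁ ≤ π * Δ * r₁ * Ea := by
    refine (abs_sin_le_mul _).trans ?_
    rw [habs₁]
    exact mul_le_mul_of_nonneg_left hexp₁ (by positivity)
  have hA₂m : A₂ ≤ π * Δ * r₂ * Ea := by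
    refine (abs_sin_le_mul _).trans ?_
    rw [habs₂]
    exact mul_le_mul_of_nonneg_left hexp₂ (by positivity)
  -- r ≤ max r₁ r₂
  have hsum : 2 * r ≤ r₁ + r₂ := by
    have h1 : w₁ + w₂ = 2 * z := by rw [hw₁, hw₂]; ring
    have h2 := norm_add_le w₁ w₂
    rw [h1, norm_mul] at h2
    simpa [hr] using h2
  -- main estimate
  have hmain : A₁ * A₂ * (1 + Δ * r) ≤ 2 * π^2 * Δ^2 * Ea^2 * (r₁ * r₂) := by
    rcases le_or_gt r r₁ with h | h
    · exact key_est hΔ0 hEa0 hr0 hA₁0 hA₂0 hr₁0 hr₂0 h hA₁e hA₁m hA₂m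
    · have h' : r ≤ r₂ := by linarith
      have := key_est hΔ0 hEa0 hr0 hA₂0 hA₁0 hr₂0 hr₁0 h' hA₂e hA₂m hA₁m
      calc A₁ * A₂ * (1 + Δ * r) = A₂ * A₁ * (1 + Δ * r) := by ring
        _ ≤ 2 * π^2 * Δ^2 * Ea^2 * (r₂ * r₁) := this
        _ = 2 * π^2 * Δ^2 * Ea^2 * (r₁ * r₂) := by ring
  -- conclude
  have hexpa : Real.exp (π*β*Δ) ≤ Dr := by
    rw [hDrdef]; nlinarith [Real.exp_pos (-(π*β*Δ))]
  have hE2 : (Real.exp (π*Δ*y))^2 = Real.exp (2*π*Δ*y) := by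
    rw [sq, ← Real.exp_add]; ring_nf
  rw [div_le_div_iff₀ (by positivity) hden]
  calc β * (4 * A₁ * A₂) * (1 + Δ * r)
      = 4 * β * (A₁ * A₂ * (1 + Δ * r)) := by ring
    _ ≤ 4 * β * (2 * π^2 * Δ^2 * Ea^2 * (r₁ * r₂)) := by gcongr
    _ = 8 * π^2 * β * Δ^2 * (Real.exp (π*Δ*y))^2 * (r₁ * r₂ * (Real.exp (π*β*Δ))^2) := by
        rw [hEa]; ring
    _ ≤ 8 * π^2 * β * Δ^2 * (Real.exp (π*Δ*y))^2 * (r₁ * r₂ * Dr^2) := by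
        gcongr
    _ = 8 * π^2 * β * Δ^2 * Real.exp (2*π*Δ*y) * (r₁ * r₂ * Dr^2) := by rw [hE2]
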